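/- For an integer d ≥ 1 define the periodic dyadic shift s_d : (0,1] → (0,1] by s_d(t) := t + 2^{−d} for t ∈ (0, 1 − 2^{−d}] and s_d(t) := t + 2^{−d} − 1 for t ∈ (1 − 2^{−d}, 1]. Then a function g ∈ L₂((0,1], λ), with λ the Lebesgue measure, satisfies g ∘ s_d = g λ-almost everywhere for every d ≥ 1 if and only if g is λ-almost everywhere equal to a constant. -/

import Mathlib

open MeasureTheory

open intervalIntegral Filter Set Metric in
/-- Additivity of the primitive under an a.e. period `h`. -/
lemma stmt17_aux_add (g1 : ℝ → ℝ) (hg1i : Integrable g1 volume) (h : ℝ)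
    (hsh : ∀ᵐ t ∂volume, t ∈ Set.Ioc (0:ℝ) (1-h) → g1 (t + h) = g1 t)
    (x : ℝ) (hx0 : 0 ≤ x) (hx1 : x ≤ 1 - h) :
    (∫ t in (0:ℝ)..(x+h), g1 t) = (∫ t in (0:ℝ)..x, g1 t) + ∫ t in (0:ℝ)..h, g1 t := by
  have hii : ∀ a b : ℝ, IntervalIntegrable g1 volume a b := fun a b => hg1i.intervalIntegrable
  have key : (∫ t in (0:ℝ)..(x+h), g1 t) - ∫ t in (0:ℝ)..h, g1 t = ∫ t in (0:ℝ)..x, g1 t := by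
    rw [integral_interval_sub_left (hii 0 (x+h)) (hii 0 h)]
    have h2 : ∫ t in (0:ℝ)..x, g1 (t + h) = ∫ t in (0+h:ℝ)..(x+h), g1 t :=
      integral_comp_add_right g1 h
    rw [zero_add] at h2
    rw [← h2]
    apply intervalIntegral.integral_congr_ae
    rw [Set.uIoc_of_le hx0]
    filter_upwards [hsh] with t ht htm
    exact ht ⟨htm.1, htm.2.trans hx1⟩
  linarith

open intervalIntegral Filter Set Metric in
/-- Wrap-around relation for the primitive. -/
lemma stmt17_aux_wrap (g1 : ℝ → ℝ) (hg1i : Integrable g1 volume) (h : ℝ) (hh : 0 ≤ h)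
    (hwr : ∀ᵐ t ∂volume, t ∈ Set.Ioc (1-h) 1 → g1 (t + (h-1)) = g1 t) :
    (∫ t in (0:ℝ)..(1:ℝ), g1 t) - ∫ t in (0:ℝ)..(1-h), g1 t = ∫ t in (0:ℝ)..h, g1 t := by
  have hii : ∀ a b : ℝ, IntervalIntegrable g1 volume a b := fun a b => hg1i.intervalIntegrable
  rw [integral_interval_sub_left (hii 0 1) (hii 0 (1-h))]
  have h2 : ∫ t in (1-h:ℝ)..(1:ℝ), g1 (t + (h-1)) = ∫ t in ((1-h)+(h-1):ℝ)..(1+(h-1)), g1 t :=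
    integral_comp_add_right g1 (h-1)
  have e1 : (1-h)+(h-1) = (0:ℝ) := by ring
  have e2 : 1+(h-1) = h := by ring
  rw [e1, e2] at h2
  rw [← h2]
  apply intervalIntegral.integral_congr_ae
  rw [Set.uIoc_of_le (by linarith : (1:ℝ)-h ≤ 1)]
  filter_upwards [hwr] with t ht htm
  exact (ht htm).symm

open intervalIntegral Filter Set Metric in
/-- From the additive and wrap relations, the primitive is linear at dyadic points. -/
lemma stmt17_aux_dyadic (g1 : ℝ → ℝ) (hg1i : Integrable g1 volume) (d : ℕ) (hd : 1 ≤ d)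
    (hsh : ∀ᵐ t ∂volume, t ∈ Set.Ioc (0:ℝ) (1-((2:ℝ)^d)⁻¹) → g1 (t + ((2:ℝ)^d)⁻¹) = g1 t)
    (hwr : ∀ᵐ t ∂volume, t ∈ Set.Ioc (1-((2:ℝ)^d)⁻¹) 1 → g1 (t + (((2:ℝ)^d)⁻¹-1)) = g1 t) :
    ∀ k : ℕ, k ≤ 2^d →
      (∫ t in (0:ℝ)..((k : ℝ) * ((2:ℝ)^d)⁻¹), g1 t)
        = (∫ t in (0:ℝ)..(1:ℝ), g1 t) * ((k : ℝ) * ((2:ℝ)^d)⁻¹) := by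
  set h : ℝ := ((2:ℝ)^d)⁻¹ with hh
  have hp : (0:ℝ) < (2:ℝ)^d := by positivity
  have h0 : 0 < h := by positivity
  have hcancel : (2:ℝ)^d * h = 1 := mul_inv_cancel₀ (ne_of_gt hp)
  have h1 : h ≤ 1 := by
    rw [hh]
    rw [inv_le_one_iff₀]
    right
    exact one_le_pow₀ (by norm_num)
  set F : ℝ → ℝ := fun y => ∫ t in (0:ℝ)..y, g1 t with hF
  -- F (k*h) = k * F h for k ≤ 2^d
  have hkh : ∀ k : ℕ, k ≤ 2^d → F ((k:ℝ) * h) = (k:ℝ) * F h := by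
    intro k
    induction k with
    | zero => intro _; simp [hF]
    | succ k ih =>
      intro hk
      have hk' : k ≤ 2^d := le_of_lt (Nat.lt_of_succ_le hk)
      have hkr : ((k:ℝ) + 1) ≤ (2:ℝ)^d := by
        have : ((k+1 : ℕ) : ℝ) ≤ ((2^d : ℕ) : ℝ) := Nat.cast_le.2 hk
        push_cast at this
        convert this using 2 <;> push_cast <;> ring
      have hx1 : (k:ℝ) * h ≤ 1 - h := by
        have : ((k:ℝ) + 1) * h ≤ (2:ℝ)^d * h := by
          apply mul_le_mul_of_nonneg_right hkr (le_of_lt h0)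
        rw [hcancel] at this
        nlinarith
      have hx0 : (0:ℝ) ≤ (k:ℝ) * h := by positivity
      have hadd := stmt17_aux_add g1 hg1i h hsh ((k:ℝ) * h) hx0 hx1
      have ihk := ih hk'
      simp only [hF] at ihk ⊢
      push_cast
      have hrw : ((k:ℝ) + 1) * h = (k:ℝ) * h + h := by ring
      rw [hrw, hadd, ihk]
      ring
  -- F h = F 1 * h
  have hFh : F h = F 1 * h := by
    have h2d := hkh (2^d) le_rfl
    have hcast : ((2^d : ℕ) : ℝ) = (2:ℝ)^d := by push_cast; ring
    rw [hcast, hcancel] at h2d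
    -- h2d : F 1 = 2^d * F h
    have : F h = F 1 / (2:ℝ)^d := by
      rw [h2d]; field_simp
    rw [this, hh]; field_simp
  intro k hk
  have hres := hkh k hk
  rw [hFh] at hres
  simp only [hF] at hres
  rw [hres]
  ring

open intervalIntegral Filter Set Metric in
/-- The primitive is linear on `[0,1]`. -/
lemma stmt17_aux_linear (g1 : ℝ → ℝ) (hg1i : Integrable g1 volume)
    (key : ∀ d : ℕ, 1 ≤ d → ∀ k : ℕ, k ≤ 2^d →
      (∫ t in (0:ℝ)..((k : ℝ) * ((2:ℝ)^d)⁻¹), g1 t)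
        = (∫ t in (0:ℝ)..(1:ℝ), g1 t) * ((k : ℝ) * ((2:ℝ)^d)⁻¹))
    (x : ℝ) (hx : x ∈ Set.Icc (0:ℝ) 1) :
    (∫ t in (0:ℝ)..x, g1 t) = (∫ t in (0:ℝ)..(1:ℝ), g1 t) * x := by
  obtain ⟨hx0, hx1⟩ := hx
  set F : ℝ → ℝ := fun y => ∫ t in (0:ℝ)..y, g1 t with hF
  have hFc : Continuous F :=
    intervalIntegral.continuous_primitive (fun a b => hg1i.intervalIntegrable) 0
  set c : ℝ := F 1 with hc
  set a : ℕ → ℝ := fun n => (⌊x * 2^(n+1)⌋₊ : ℝ) * ((2:ℝ)^(n+1))⁻¹ with ha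
  have hp : ∀ n : ℕ, (0:ℝ) < (2:ℝ)^(n+1) := fun n => by positivity
  have hklow : ∀ n : ℕ, x - ((2:ℝ)^(n+1))⁻¹ ≤ a n := by
    intro n
    have h2 : x * 2^(n+1) - 1 < (⌊x * 2^(n+1)⌋₊ : ℝ) := Nat.sub_one_lt_floor _
    have hpn := hp n
    have e1 : x - ((2:ℝ)^(n+1))⁻¹ = (x * 2^(n+1) - 1) / 2^(n+1) := by field_simp
    have e2 : a n = (⌊x * 2^(n+1)⌋₊ : ℝ) / 2^(n+1) := by rw [ha]; ring
    rw [e1, e2]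
    gcongr
  have hkhigh : ∀ n : ℕ, a n ≤ x := by
    intro n
    have h1 : (⌊x * 2^(n+1)⌋₊ : ℝ) ≤ x * 2^(n+1) :=
      Nat.floor_le (by positivity)
    have hpn := hp n
    have e2 : a n = (⌊x * 2^(n+1)⌋₊ : ℝ) / 2^(n+1) := by rw [ha]; ring
    rw [e2]
    rw [div_le_iff₀ hpn]
    nlinarith
  have hinv : Filter.Tendsto (fun n : ℕ => ((2:ℝ)^(n+1))⁻¹) atTop (nhds 0) := by
    have : ∀ n : ℕ, ((2:ℝ)^(n+1))⁻¹ = (1/2:ℝ)^(n+1) := by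
      intro n; rw [div_pow]; simp
    simp only [this]
    have h12 : |(1/2 : ℝ)| < 1 := by rw [abs_of_pos] <;> norm_num
    have := tendsto_pow_atTop_nhds_zero_of_abs_lt_one h12
    exact this.comp (tendsto_add_atTop_nat 1)
  have htend : Filter.Tendsto a atTop (nhds x) := by
    apply tendsto_of_tendsto_of_tendsto_of_le_of_le
      (g := fun n : ℕ => x - ((2:ℝ)^(n+1))⁻¹) (h := fun _ : ℕ => x)
    · simpa using tendsto_const_nhds.sub hinv
    · exact tendsto_const_nhds
    · exact hklow
    · exact hkhigh
  have hFa : ∀ n : ℕ, F (a n) = c * a n := by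
    intro n
    have hkle : ⌊x * 2^(n+1)⌋₊ ≤ 2^(n+1) := by
      have h1 : x * 2^(n+1) ≤ ((2^(n+1) : ℕ) : ℝ) := by
        push_cast
        nlinarith [hp n]
      calc ⌊x * 2^(n+1)⌋₊ ≤ ⌊((2^(n+1):ℕ):ℝ)⌋₊ := Nat.floor_mono h1
        _ = 2^(n+1) := Nat.floor_natCast _
    exact key (n+1) (Nat.le_add_left 1 n) _ hkle
  have hT1 : Filter.Tendsto (fun n => F (a n)) atTop (nhds (F x)) :=
    (hFc.tendsto x).comp htend
  have hT2 : Filter.Tendsto (fun n => F (a n)) atTop (nhds (c * x)) := by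
    have : (fun n => F (a n)) = fun n => c * a n := funext hFa
    rw [this]
    exact (tendsto_const_nhds.mul htend)
  exact tendsto_nhds_unique hT1 hT2

open intervalIntegral Filter Set Metric in
/-- Lebesgue differentiation: if the primitive is linear on `[0,1]`, the function is a.e.
constant on `(0,1)`. -/
lemma stmt17_aux_diff (g1 : ℝ → ℝ) (hg1i : Integrable g1 volume)
    (hlin : ∀ x ∈ Set.Icc (0:ℝ) 1,
      (∫ t in (0:ℝ)..x, g1 t) = (∫ t in (0:ℝ)..(1:ℝ), g1 t) * x) :
    ∀ᵐ x ∂(volume : Measure ℝ), x ∈ Set.Ioo (0:ℝ) 1 →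
      g1 x = ∫ t in (0:ℝ)..(1:ℝ), g1 t := by
  set c : ℝ := ∫ t in (0:ℝ)..(1:ℝ), g1 t with hc
  have hii : ∀ a b : ℝ, IntervalIntegrable g1 volume a b := fun a b => hg1i.intervalIntegrable
  filter_upwards [IsUnifLocDoublingMeasure.ae_tendsto_average (volume : Measure ℝ)
    hg1i.locallyIntegrable 1] with x hx hxm
  obtain ⟨hx0, hx1⟩ := hxm
  have h1 : Filter.Tendsto (fun r : ℝ => ⨍ y in closedBall x r, g1 y)
      (nhdsWithin 0 (Set.Ioi 0)) (nhds (g1 x)) := by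
    refine hx (ι := ℝ) (l := nhdsWithin 0 (Set.Ioi 0)) (fun _ => x) id tendsto_id ?_
    filter_upwards [self_mem_nhdsWithin] with r hr
    have h0r : (0:ℝ) ≤ 1 * r := by simpa using le_of_lt (Set.mem_Ioi.1 hr)
    exact Metric.mem_closedBall_self h0r
  have h2 : ∀ᶠ r in nhdsWithin (0:ℝ) (Set.Ioi 0),
      (fun r : ℝ => ⨍ y in closedBall x r, g1 y) r = c := by
    have hmem : Set.Ioo (0:ℝ) (min x (1-x)) ∈ nhdsWithin (0:ℝ) (Set.Ioi 0) := by
      apply Ioo_mem_nhdsGT_of_mem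
      constructor
      · exact le_refl 0
      · exact lt_min hx0 (by linarith)
    filter_upwards [hmem] with r hr
    obtain ⟨hr0, hrm⟩ := hr
    have hrx : r < x := lt_of_lt_of_le hrm (min_le_left _ _)
    have hrx1 : r < 1 - x := lt_of_lt_of_le hrm (min_le_right _ _)
    have hab : x - r ≤ x + r := by linarith
    have hint : (∫ y in closedBall x r, g1 y) = c * (2 * r) := by
      rw [Real.closedBall_eq_Icc, MeasureTheory.integral_Icc_eq_integral_Ioc]
      have : (∫ y in Set.Ioc (x-r) (x+r), g1 y) = ∫ t in (x-r)..(x+r), g1 t :=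
        (intervalIntegral.integral_of_le hab).symm
      rw [this]
      rw [← integral_interval_sub_left (hii 0 (x+r)) (hii 0 (x-r))]
      rw [hlin (x+r) ⟨by linarith, by linarith⟩, hlin (x-r) ⟨by linarith, by linarith⟩]
      ring
    rw [setAverage_eq, hint, Real.volume_real_closedBall (by linarith)]
    rw [smul_eq_mul]
    field_simp
  have h3 : Filter.Tendsto (fun r : ℝ => ⨍ y in closedBall x r, g1 y)
      (nhdsWithin 0 (Set.Ioi 0)) (nhds c) :=
    Filter.Tendsto.congr' (Filter.EventuallyEq.symm h2) tendsto_const_nhds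
  exact tendsto_nhds_unique h1 h3

/-- The periodic dyadic shift `s_d : (0,1] → (0,1]`:
`s_d t = t + 2^{-d}` for `t ∈ (0, 1 - 2^{-d}]` and `s_d t = t + 2^{-d} - 1` for
`t ∈ (1 - 2^{-d}, 1]` (the formula is extended to all of `ℝ`; only `(0,1]` matters). -/
noncomputable def sdShift (d : ℕ) (t : ℝ) : ℝ :=
  if t ≤ 1 - (2 ^ d : ℝ)⁻¹ then t + (2 ^ d : ℝ)⁻¹ else t + (2 ^ d : ℝ)⁻¹ - 1

/-- a function `g ∈ L₂((0,1], λ)` satisfies `g ∘ s_d = g` λ-a.e. on `(0,1]`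
for every `d ≥ 1` if and only if `g` is λ-a.e. constant on `(0,1]`. -/
theorem stmt17 (g : ℝ → ℝ) (hg : MemLp g 2 (volume.restrict (Set.Ioc (0 : ℝ) 1))) :
    (∀ d : ℕ, 1 ≤ d →
        (fun t => g (sdShift d t)) =ᵐ[volume.restrict (Set.Ioc (0 : ℝ) 1)] g) ↔
      ∃ c : ℝ, g =ᵐ[volume.restrict (Set.Ioc (0 : ℝ) 1)] fun _ => c := by
  have hm : MeasurableSet (Set.Ioc (0:ℝ) 1) := measurableSet_Ioc
  constructor
  · intro H
    have hgi : Integrable g (volume.restrict (Set.Ioc (0:ℝ) 1)) := hg.integrable (by norm_num)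
    set g1 : ℝ → ℝ := (Set.Ioc (0:ℝ) 1).indicator g with hg1
    have hg1i : Integrable g1 volume := (integrable_indicator_iff hm).2 hgi
    have key : ∀ d : ℕ, 1 ≤ d → ∀ k : ℕ, k ≤ 2^d →
        (∫ t in (0:ℝ)..((k : ℝ) * ((2:ℝ)^d)⁻¹), g1 t)
          = (∫ t in (0:ℝ)..(1:ℝ), g1 t) * ((k : ℝ) * ((2:ℝ)^d)⁻¹) := by
      intro d hd
      set h : ℝ := ((2:ℝ)^d)⁻¹ with hhdef
      have hp : (0:ℝ) < (2:ℝ)^d := by positivity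
      have h0 : 0 < h := by positivity
      have h2d : (2:ℝ) ≤ 2^d := by
        calc (2:ℝ) = 2^1 := (pow_one 2).symm
        _ ≤ 2^d := pow_le_pow_right₀ (by norm_num) hd
      have hhalf : h ≤ 1/2 := by
        rw [hhdef, show (1:ℝ)/2 = (2:ℝ)⁻¹ by norm_num]
        exact inv_anti₀ (by norm_num) h2d
      have hae := (ae_restrict_iff' hm).1 (H d hd)
      have hsh : ∀ᵐ t ∂volume, t ∈ Set.Ioc (0:ℝ) (1-h) → g1 (t + h) = g1 t := by
        filter_upwards [hae] with t ht htm
        have ht01 : t ∈ Set.Ioc (0:ℝ) 1 := ⟨htm.1, htm.2.trans (by linarith)⟩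
        have hsd : sdShift d t = t + h := by
          rw [sdShift, if_pos htm.2]
        have hmem : t + h ∈ Set.Ioc (0:ℝ) 1 := ⟨by linarith [htm.1], by linarith [htm.2]⟩
        rw [hg1, Set.indicator_of_mem hmem, Set.indicator_of_mem ht01, ← hsd]
        exact ht ht01
      have hwr : ∀ᵐ t ∂volume, t ∈ Set.Ioc (1-h) 1 → g1 (t + (h-1)) = g1 t := by
        filter_upwards [hae] with t ht htm
        have ht01 : t ∈ Set.Ioc (0:ℝ) 1 := ⟨by linarith [htm.1], htm.2⟩
        have hsd : sdShift d t = t + h - 1 := by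
          rw [sdShift, if_neg (not_le.2 htm.1)]
        have hmem : t + (h-1) ∈ Set.Ioc (0:ℝ) 1 :=
          ⟨by linarith [htm.1], by linarith [htm.2]⟩
        rw [hg1, Set.indicator_of_mem hmem, Set.indicator_of_mem ht01]
        have hrw : t + (h-1) = sdShift d t := by rw [hsd]; ring
        rw [hrw]
        exact ht ht01
      exact stmt17_aux_dyadic g1 hg1i d hd hsh hwr
    have hlin := fun x hx => stmt17_aux_linear g1 hg1i key x hx
    have hdiff := stmt17_aux_diff g1 hg1i hlin
    refine ⟨∫ t in (0:ℝ)..(1:ℝ), g1 t, ?_⟩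
    rw [Filter.EventuallyEq, ae_restrict_iff' hm]
    have hne1 : ∀ᵐ t : ℝ ∂volume, t ≠ 1 := by
      rw [MeasureTheory.ae_iff]
      have he : {t : ℝ | ¬ t ≠ 1} = {1} := by ext t; simp
      rw [he]
      exact measure_singleton 1
    filter_upwards [hdiff, hne1] with t h1 h2 htm
    have hmem : t ∈ Set.Ioo (0:ℝ) 1 := ⟨htm.1, lt_of_le_of_ne htm.2 h2⟩
    have hres := h1 hmem
    rwa [hg1, Set.indicator_of_mem htm] at hres
  · rintro ⟨c, hc⟩ d hd
    set h : ℝ := ((2:ℝ)^d)⁻¹ with hhdef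
    have hp : (0:ℝ) < (2:ℝ)^d := by positivity
    have h0 : 0 < h := by positivity
    have h2d : (2:ℝ) ≤ 2^d := by
      calc (2:ℝ) = 2^1 := (pow_one 2).symm
      _ ≤ 2^d := pow_le_pow_right₀ (by norm_num) hd
    have hhalf : h ≤ 1/2 := by
      rw [hhdef, show (1:ℝ)/2 = (2:ℝ)⁻¹ by norm_num]
      exact inv_anti₀ (by norm_num) h2d
    have hN : volume ({x | g x ≠ c} ∩ Set.Ioc (0:ℝ) 1) = 0 := by
      rw [Filter.EventuallyEq, MeasureTheory.ae_iff] at hc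
      rw [Measure.restrict_apply' hm] at hc
      exact hc
    set N := {x | g x ≠ c} ∩ Set.Ioc (0:ℝ) 1 with hNdef
    rw [Filter.EventuallyEq, MeasureTheory.ae_iff, Measure.restrict_apply' hm]
    have hnull : volume (((fun t => t + h) ⁻¹' N) ∪ ((fun t => t + (h-1)) ⁻¹' N) ∪ N) = 0 := by
      apply measure_union_null
      · apply measure_union_null
        · have hpre := measure_preimage_add_right (volume : Measure ℝ) h N
          rw [hN] at hpre
          exact hpre
        · have hpre := measure_preimage_add_right (volume : Measure ℝ) (h-1) N
          rw [hN] at hpre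
          exact hpre
      · exact hN
    refine measure_mono_null ?_ hnull
    intro t ht
    obtain ⟨htne, htm⟩ := ht
    by_cases hgc : g t = c
    · have hs : g (sdShift d t) ≠ c := by
        intro hcc
        exact htne (by rw [hcc, hgc])
      by_cases hcase : t ≤ 1 - h
      · left; left
        have hsd : sdShift d t = t + h := by rw [sdShift, if_pos hcase]
        refine Set.mem_preimage.2 ?_
        rw [hNdef]
        constructor
        · show g (t + h) ≠ c
          rw [← hsd]; exact hs
        · exact ⟨by linarith [htm.1], by linarith [hcase]⟩
      · left; right
        push_neg at hcase
        have hsd : sdShift d t = t + h - 1 := by rw [sdShift, if_neg (not_le.2 hcase)]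
        refine Set.mem_preimage.2 ?_
        rw [hNdef]
        constructor
        · show g (t + (h-1)) ≠ c
          have heq : t + (h-1) = sdShift d t := by rw [hsd]; ring
          rw [heq]; exact hs
        · exact ⟨by linarith [htm.2, hcase], by linarith [htm.2]⟩
    · right; exact ⟨hgc, htm⟩
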